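/- For the Smoothed DCG@1 loss with smoothing parameter σ > 0, the gradient with respect to the score vector satisfies ‖∇_s φ_SD(s,y)‖_1 ≤ 2 D(1) G(Y_max)/σ for all s ∈ ℝ^m and all y with entries in {0,...,Y_max}, independent of m. -/

import Mathlib

open scoped BigOperators

/-- The smoothed softmax with temperature σ: `P_i = exp(s_i/σ) / ∑_j exp(s_j/σ)`. -/
noncomputable def smoothP {m : ℕ} (σ : ℝ) (s : Fin m → ℝ) (i : Fin m) : ℝ :=
  Real.exp (s i / σ) / ∑ j, Real.exp (s j / σ)

/-- The discount `D(1) = 1/log₂(1+1)`. -/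
noncomputable def discount1 : ℝ := 1 / Real.logb 2 2

/-- The gain `G(k) = 2^k - 1`. -/
noncomputable def gain (k : ℕ) : ℝ := 2 ^ k - 1

/-- The Smoothed DCG@1 loss `φ_SD(s,y) = D(1) ∑_i G(y_i) exp(s_i/σ)/∑_j exp(s_j/σ)`. -/
noncomputable def sdcg {m : ℕ} (σ : ℝ) (s : Fin m → ℝ) (y : Fin m → ℕ) : ℝ :=
  discount1 * ∑ i, gain (y i) * smoothP σ s i

/-- The k-th component of the gradient of Smoothed DCG@1 w.r.t. the score vector. -/
noncomputable def sdcgGrad {m : ℕ} (σ : ℝ) (s : Fin m → ℝ) (y : Fin m → ℕ) (k : Fin m) : ℝ :=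
  discount1 * (1 / σ) *
    (gain (y k) * smoothP σ s k - smoothP σ s k * ∑ i, gain (y i) * smoothP σ s i)

lemma gain_nonneg (k : ℕ) : 0 ≤ gain k := by
  simp only [gain, sub_nonneg]
  exact one_le_pow₀ (by norm_num)

lemma gain_mono {a b : ℕ} (h : a ≤ b) : gain a ≤ gain b := by
  simp only [gain, sub_le_sub_iff_right]
  exact pow_le_pow_right₀ (by norm_num) h

lemma discount1_eq_one : discount1 = 1 := by
  simp [discount1]

/-- Derivative of `t ↦ exp(t k / σ)`. -/
lemma hasFDerivAt_exp_div {m : ℕ} (σ : ℝ) (s : Fin m → ℝ) (k : Fin m) :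
    HasFDerivAt (fun t : Fin m → ℝ => Real.exp (t k / σ))
      ((Real.exp (s k / σ) * σ⁻¹) •
        ContinuousLinearMap.proj (R := ℝ) (φ := fun _ : Fin m => ℝ) k) s := by
  have h1 : HasFDerivAt (fun t : Fin m → ℝ => t k / σ)
      (σ⁻¹ • ContinuousLinearMap.proj (R := ℝ) (φ := fun _ : Fin m => ℝ) k) s := by
    simpa [div_eq_mul_inv] using
      ((ContinuousLinearMap.proj (R := ℝ) (φ := fun _ : Fin m => ℝ) k).hasFDerivAt
        (x := s)).mul_const σ⁻¹
  have := (Real.hasDerivAt_exp (s k / σ)).comp_hasFDerivAt s h1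
  simpa [Function.comp_def, smul_smul] using this

set_option maxHeartbeats 1000000 in
/-- The gradient of Smoothed DCG@1 w.r.t. the score vector has ℓ1 norm at most
`2 D(1) G(Y_max) / σ`, independently of `m`. -/
theorem sdcg_grad_l1_bound {m : ℕ} (σ : ℝ) (hσ : 0 < σ) (s : Fin m → ℝ)
    (Ymax : ℕ) (y : Fin m → ℕ) (hy : ∀ i, y i ≤ Ymax) :
    HasFDerivAt (fun t => sdcg σ t y)
      (∑ j, sdcgGrad σ s y j •
        (ContinuousLinearMap.proj (R := ℝ) (φ := fun _ : Fin m => ℝ) j)) s ∧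
    ∑ k, |sdcgGrad σ s y k| ≤ 2 * discount1 * gain Ymax / σ := by
  have hRHS : 0 ≤ 2 * discount1 * gain Ymax / σ := by
    apply div_nonneg _ hσ.le
    have := gain_nonneg Ymax
    rw [discount1_eq_one]; linarith
  rcases isEmpty_or_nonempty (Fin m) with hm | hm
  · constructor
    · have h0 : (fun t : Fin m → ℝ => sdcg σ t y) = fun _ => 0 := by
        funext t; simp [sdcg]
      rw [h0]
      simpa using hasFDerivAt_const (0 : ℝ) s
    · simpa using hRHS
  -- main case: `Fin m` nonempty
  set e : Fin m → ℝ := fun i => Real.exp (s i / σ) with he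
  set E : ℝ := ∑ j, e j with hE
  set N : ℝ := ∑ i, gain (y i) * e i with hN
  have hEpos : 0 < E := Finset.sum_pos (fun i _ => Real.exp_pos _) Finset.univ_nonempty
  have hEne : E ≠ 0 := hEpos.ne'
  have hσne : σ ≠ 0 := hσ.ne'
  -- softmax facts
  have hPdef : ∀ i, smoothP σ s i = e i / E := fun i => rfl
  have hPnonneg : ∀ i, 0 ≤ smoothP σ s i := fun i =>
    div_nonneg (Real.exp_pos _).le hEpos.le
  have hPsum : ∑ i, smoothP σ s i = 1 := by
    simp only [hPdef]
    rw [← Finset.sum_div]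
    field_simp
    rfl
  have hA : (∑ i, gain (y i) * smoothP σ s i) = N / E := by
    simp only [hPdef, hN]
    rw [Finset.sum_div]
    exact Finset.sum_congr rfl fun i _ => by ring
  constructor
  · -- the derivative
    have hD : HasFDerivAt (fun t : Fin m → ℝ => ∑ j, Real.exp (t j / σ))
        (∑ j, (e j * σ⁻¹) •
          ContinuousLinearMap.proj (R := ℝ) (φ := fun _ : Fin m => ℝ) j) s :=
      HasFDerivAt.fun_sum fun j _ => hasFDerivAt_exp_div σ s j
    have hNder : HasFDerivAt (fun t : Fin m → ℝ => ∑ i, gain (y i) * Real.exp (t i / σ))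
        (∑ i, gain (y i) • (e i * σ⁻¹) •
          ContinuousLinearMap.proj (R := ℝ) (φ := fun _ : Fin m => ℝ) i) s :=
      HasFDerivAt.fun_sum fun i _ => (hasFDerivAt_exp_div σ s i).const_mul _
    have hinv : HasFDerivAt (fun t : Fin m → ℝ => (∑ j, Real.exp (t j / σ))⁻¹)
        (-((E ^ 2)⁻¹ • ∑ j, (e j * σ⁻¹) •
          ContinuousLinearMap.proj (R := ℝ) (φ := fun _ : Fin m => ℝ) j)) s := by
      have := (hasDerivAt_inv hEne).comp_hasFDerivAt s hD
      simpa [Function.comp_def] using this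
    have hmul := (hNder.mul hinv).const_mul discount1
    have hfun : (fun t : Fin m → ℝ => sdcg σ t y) =
        fun t => discount1 * ((∑ i, gain (y i) * Real.exp (t i / σ)) *
          (∑ j, Real.exp (t j / σ))⁻¹) := by
      funext t
      simp only [sdcg, smoothP, div_eq_mul_inv, Finset.sum_mul]
      congr 1
      exact Finset.sum_congr rfl fun i _ => by ring
    rw [hfun]
    refine hmul.congr_fderiv ?_
    symm
    refine ContinuousLinearMap.ext fun v => ?_
    simp only [ContinuousLinearMap.sum_apply, ContinuousLinearMap.smul_apply,
      ContinuousLinearMap.proj_apply, ContinuousLinearMap.add_apply,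
      ContinuousLinearMap.neg_apply, smul_eq_mul, ← hE, ← hN]
    simp only [mul_neg, Finset.mul_sum, ← Finset.sum_neg_distrib, ← Finset.sum_add_distrib]
    refine Finset.sum_congr rfl fun j _ => ?_
    simp only [sdcgGrad]
    rw [hA]
    simp only [hPdef]
    field_simp
    ring
  · -- the ℓ1 bound
    have hgY : ∀ i, gain (y i) ≤ gain Ymax := fun i => gain_mono (hy i)
    have hg0 : ∀ i, 0 ≤ gain (y i) := fun i => gain_nonneg _
    set A : ℝ := ∑ i, gain (y i) * smoothP σ s i with hAdef
    have hAnonneg : 0 ≤ A :=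
      Finset.sum_nonneg fun i _ => mul_nonneg (hg0 i) (hPnonneg i)
    have hAle : A ≤ gain Ymax := by
      calc A ≤ ∑ i, gain Ymax * smoothP σ s i :=
            Finset.sum_le_sum fun i _ => mul_le_mul_of_nonneg_right (hgY i) (hPnonneg i)
        _ = gain Ymax := by rw [← Finset.mul_sum, hPsum, mul_one]
    have key : ∀ k, |sdcgGrad σ s y k| ≤ (1 / σ) * (gain Ymax * smoothP σ s k) := by
      intro k
      have habs : |gain (y k) - A| ≤ gain Ymax := by
        rw [abs_sub_le_iff]
        constructor <;> [linarith [hgY k, hAnonneg]; linarith [hg0 k, hAle]]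
      have : |sdcgGrad σ s y k| = (1 / σ) * (smoothP σ s k * |gain (y k) - A|) := by
        simp only [sdcgGrad, ← hAdef, discount1_eq_one, one_mul]
        rw [show gain (y k) * smoothP σ s k - smoothP σ s k * A =
              smoothP σ s k * (gain (y k) - A) from by ring]
        rw [abs_mul, abs_mul, abs_of_nonneg (by positivity : (0:ℝ) ≤ 1 / σ),
          abs_of_nonneg (hPnonneg k)]
      rw [this]
      have := hPnonneg k
      have h1σ : (0:ℝ) ≤ 1 / σ := by positivity
      apply mul_le_mul_of_nonneg_left _ h1σ
      calc smoothP σ s k * |gain (y k) - A| ≤ smoothP σ s k * gain Ymax :=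
            mul_le_mul_of_nonneg_left habs this
        _ = gain Ymax * smoothP σ s k := by ring
    calc ∑ k, |sdcgGrad σ s y k| ≤ ∑ k, (1 / σ) * (gain Ymax * smoothP σ s k) :=
          Finset.sum_le_sum fun k _ => key k
      _ = (1 / σ) * (gain Ymax * ∑ k, smoothP σ s k) := by
          rw [Finset.mul_sum, Finset.mul_sum]
      _ = gain Ymax / σ := by rw [hPsum, mul_one]; ring
      _ ≤ 2 * discount1 * gain Ymax / σ := by
          rw [discount1_eq_one]
          have h := gain_nonneg Ymax
          gcongr
          linarith
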